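/- Let d ≥ 2 and let k_1, k_2 ∈ {2, …, d}. Let c_1 ∈ S^{d-1} ⊂ E^d be a unit vector having exactly k_1 nonzero coordinates, each equal to 1/√k_1, and let c_2 ∈ S^{d-1} be a unit vector having exactly k_2 nonzero coordinates, each equal to 1/√k_2. If the closed spherical caps C(c_1, arcsin(1/√k_1)) and C(c_2, arcsin(1/√k_2)) have disjoint interiors, then k_1 + k_2 - d ≤ √((k_1 - 1)(k_2 - 1)) - 1. -/

import Mathlib

open scoped RealInnerProductSpace

set_option maxHeartbeats 1000000 in
/-- If a `k₁`-tangent cap (center with exactly `k₁` coordinates equal to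
`1/√k₁`, rest zero; spherical radius `arcsin(1/√k₁)`) and a `k₂`-tangent cap on
`S^{d-1} ⊂ E^d` have disjoint interiors, then `k₁ + k₂ - d ≤ √((k₁-1)(k₂-1)) - 1`. -/
theorem kTangent_caps_packing_ineq {d : ℕ} (hd : 2 ≤ d) (k₁ k₂ : ℕ)
    (hk₁ : 2 ≤ k₁ ∧ k₁ ≤ d) (hk₂ : 2 ≤ k₂ ∧ k₂ ≤ d)
    (c₁ c₂ : EuclideanSpace ℝ (Fin d))
    (S₁ S₂ : Finset (Fin d)) (hS₁ : S₁.card = k₁) (hS₂ : S₂.card = k₂)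
    (hc₁ : ∀ i, c₁ i = if i ∈ S₁ then (Real.sqrt k₁)⁻¹ else 0)
    (hc₂ : ∀ i, c₂ i = if i ∈ S₂ then (Real.sqrt k₂)⁻¹ else 0)
    (hdisj : Disjoint
      {x : EuclideanSpace ℝ (Fin d) |
        ‖x‖ = 1 ∧ Real.cos (Real.arcsin (Real.sqrt k₁)⁻¹) < ⟪x, c₁⟫}
      {x : EuclideanSpace ℝ (Fin d) |
        ‖x‖ = 1 ∧ Real.cos (Real.arcsin (Real.sqrt k₂)⁻¹) < ⟪x, c₂⟫}) :
    (k₁ : ℝ) + k₂ - d ≤ Real.sqrt (((k₁ : ℝ) - 1) * ((k₂ : ℝ) - 1)) - 1 := by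
  by_contra hcon
  push_neg at hcon
  set m : ℕ := (S₁ ∩ S₂).card with hm
  -- inclusion-exclusion: k₁ + k₂ ≤ d + m
  have hcards : k₁ + k₂ ≤ d + m := by
    have h1 : (S₁ ∪ S₂).card + (S₁ ∩ S₂).card = k₁ + k₂ := by
      rw [Finset.card_union_add_card_inter, hS₁, hS₂]
    have h2 : (S₁ ∪ S₂).card ≤ d := by
      simpa using Finset.card_le_univ (S₁ ∪ S₂)
    omega
  have hmR : (k₁ : ℝ) + k₂ - d ≤ m := by
    have := hcards
    push_cast [← Nat.cast_le (α := ℝ)] at this ⊢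
    linarith [this]
  -- √((k₁-1)(k₂-1)) < m + 1
  have hP : ((k₁ : ℝ) - 1) * ((k₂ : ℝ) - 1) < ((m : ℝ) + 1) ^ 2 := by
    have h1 : Real.sqrt (((k₁ : ℝ) - 1) * ((k₂ : ℝ) - 1)) < (m : ℝ) + 1 := by
      linarith
    have h2 : (0 : ℝ) < (m : ℝ) + 1 := by positivity
    exact (Real.sqrt_lt' h2).mp h1
  -- basic positivity facts
  have hk₁R : (2 : ℝ) ≤ k₁ := by exact_mod_cast hk₁.1
  have hk₂R : (2 : ℝ) ≤ k₂ := by exact_mod_cast hk₂.1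
  have hk₁0 : (0 : ℝ) < k₁ := by linarith
  have hk₂0 : (0 : ℝ) < k₂ := by linarith
  have hT0 : (0 : ℝ) < (k₁ : ℝ) + k₂ + 2 * m := by positivity
  set nR : ℝ := Real.sqrt ((k₁ : ℝ) + k₂ + 2 * m) with hnR
  have hnR0 : 0 < nR := Real.sqrt_pos.mpr hT0
  have hnRsq : nR ^ 2 = (k₁ : ℝ) + k₂ + 2 * m := Real.sq_sqrt hT0.le
  -- the witness point
  set x : EuclideanSpace ℝ (Fin d) :=
    WithLp.toLp 2 (fun i => ((if i ∈ S₁ then (1:ℝ) else 0) + (if i ∈ S₂ then (1:ℝ) else 0)) / nR) with hx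
  -- sums
  have hsum : ∀ S : Finset (Fin d), ∑ i, (if i ∈ S then (1:ℝ) else 0) = S.card := by
    intro S; simp
  have hsum12 : ∑ i, (if i ∈ S₁ then (1:ℝ) else 0) * (if i ∈ S₂ then (1:ℝ) else 0) = m := by
    have h : ∀ i, (if i ∈ S₁ then (1:ℝ) else 0) * (if i ∈ S₂ then (1:ℝ) else 0)
        = if i ∈ S₁ ∩ S₂ then (1:ℝ) else 0 := by
      intro i; by_cases h1 : i ∈ S₁ <;> by_cases h2 : i ∈ S₂ <;>
        simp [h1, h2, Finset.mem_inter]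
    rw [Finset.sum_congr rfl fun i _ => h i, hsum]
  have hnormsq : ∑ i, ((if i ∈ S₁ then (1:ℝ) else 0) + (if i ∈ S₂ then (1:ℝ) else 0)) ^ 2
      = (k₁ : ℝ) + k₂ + 2 * m := by
    have h : ∀ i, ((if i ∈ S₁ then (1:ℝ) else 0) + (if i ∈ S₂ then (1:ℝ) else 0)) ^ 2
        = (if i ∈ S₁ then (1:ℝ) else 0) + (if i ∈ S₂ then (1:ℝ) else 0)
          + 2 * ((if i ∈ S₁ then (1:ℝ) else 0) * (if i ∈ S₂ then (1:ℝ) else 0)) := by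
      intro i; by_cases h1 : i ∈ S₁ <;> by_cases h2 : i ∈ S₂ <;> simp [h1, h2] <;> try ring
    rw [Finset.sum_congr rfl fun i _ => h i]
    rw [Finset.sum_add_distrib, Finset.sum_add_distrib, ← Finset.mul_sum, hsum, hsum,
      hsum12, hS₁, hS₂]
  have hxnorm : ‖x‖ = 1 := by
    rw [EuclideanSpace.norm_eq]
    have : ∑ i, ‖x i‖ ^ 2 = 1 := by
      have h : ∀ i, ‖x i‖ ^ 2
          = ((if i ∈ S₁ then (1:ℝ) else 0) + (if i ∈ S₂ then (1:ℝ) else 0)) ^ 2 / nR ^ 2 := by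
        intro i
        rw [hx]
        simp [Real.norm_eq_abs, sq_abs, div_pow]
      rw [Finset.sum_congr rfl fun i _ => h i, ← Finset.sum_div, hnormsq, hnRsq]
      field_simp
    rw [this, Real.sqrt_one]
  -- generic membership lemma
  have key : ∀ (k : ℕ) (S : Finset (Fin d)) (c : EuclideanSpace ℝ (Fin d)),
      2 ≤ k → S.card = k →
      (∀ i, c i = if i ∈ S then (Real.sqrt k)⁻¹ else 0) →
      ((k : ℝ) - 1) * ((k₁ : ℝ) + k₂ + 2 * m) < ((k : ℝ) + (S ∩ (S₁ ∩ S₂)).card) ^ 2 →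
      S = S₁ ∨ S = S₂ →
      Real.cos (Real.arcsin (Real.sqrt k)⁻¹) < ⟪x, c⟫ := by
    intro k S c hk hScard hc hineq hSor
    have hkR : (2 : ℝ) ≤ k := by exact_mod_cast hk
    have hk0 : (0 : ℝ) < k := by linarith
    have hsk0 : (0 : ℝ) < Real.sqrt k := Real.sqrt_pos.mpr hk0
    have hsksq : (Real.sqrt k) ^ 2 = (k : ℝ) := Real.sq_sqrt hk0.le
    -- the inner product
    have hinner : ⟪x, c⟫ = ((k : ℝ) + (S ∩ (S₁ ∩ S₂)).card) / (Real.sqrt k * nR) := by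
      rw [PiLp.inner_apply]
      have h : ∀ i, (inner ℝ (x i) (c i) : ℝ)
          = (((if i ∈ S₁ then (1:ℝ) else 0) + (if i ∈ S₂ then (1:ℝ) else 0))
              * (if i ∈ S then (1:ℝ) else 0)) / (Real.sqrt k * nR) := by
        intro i
        rw [hx, hc]
        simp only [RCLike.inner_apply, conj_trivial]
        by_cases h1 : i ∈ S₁ <;> by_cases h2 : i ∈ S₂ <;> by_cases h3 : i ∈ S <;>
          simp [h1, h2, h3] <;> try ring
      rw [Finset.sum_congr rfl fun i _ => h i, ← Finset.sum_div]
      congr 1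
      have hexp : ∀ i, ((if i ∈ S₁ then (1:ℝ) else 0) + (if i ∈ S₂ then (1:ℝ) else 0))
            * (if i ∈ S then (1:ℝ) else 0)
          = (if i ∈ S then (1:ℝ) else 0) + (if i ∈ S ∩ (S₁ ∩ S₂) then (1:ℝ) else 0) := by
        intro i
        rcases hSor with rfl | rfl
        · by_cases h1 : i ∈ S <;> by_cases h2 : i ∈ S₂ <;>
            simp [h1, h2, Finset.mem_inter] <;> try ring
        · by_cases h1 : i ∈ S₁ <;> by_cases h2 : i ∈ S <;>
            simp [h1, h2, Finset.mem_inter] <;> try ring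
      rw [Finset.sum_congr rfl fun i _ => hexp i, Finset.sum_add_distrib, hsum, hsum, hScard]
    rw [hinner, Real.cos_arcsin]
    have hinv : ((Real.sqrt k)⁻¹) ^ 2 = (k : ℝ)⁻¹ := by
      rw [inv_pow, hsksq]
    rw [hinv]
    set M : ℝ := ((S ∩ (S₁ ∩ S₂)).card : ℝ) with hM
    have hM0 : (0 : ℝ) ≤ M := by positivity
    have hden0 : 0 < Real.sqrt k * nR := by positivity
    have hrhs0 : 0 < ((k : ℝ) + M) / (Real.sqrt k * nR) := by positivity
    rw [Real.sqrt_lt' hrhs0]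
    rw [div_pow, mul_pow, hsksq, hnRsq]
    have hden : 0 < (k : ℝ) * ((k₁ : ℝ) + k₂ + 2 * m) := by positivity
    rw [lt_div_iff₀ hden]
    have h1 : (1 - (k : ℝ)⁻¹) * ((k : ℝ) * ((k₁ : ℝ) + k₂ + 2 * m))
        = ((k : ℝ) - 1) * ((k₁ : ℝ) + k₂ + 2 * m) := by
      field_simp
    rw [h1]
    exact hineq
  -- m = card of relevant intersections
  have hmS₁ : (S₁ ∩ (S₁ ∩ S₂)).card = m := by
    congr 1
    rw [← Finset.inter_assoc, Finset.inter_self]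
  have hmS₂ : (S₂ ∩ (S₁ ∩ S₂)).card = m := by
    congr 1
    rw [Finset.inter_comm S₁ S₂, ← Finset.inter_assoc, Finset.inter_self]
  have hx₁ : x ∈ {y : EuclideanSpace ℝ (Fin d) |
      ‖y‖ = 1 ∧ Real.cos (Real.arcsin (Real.sqrt k₁)⁻¹) < ⟪y, c₁⟫} := by
    refine ⟨hxnorm, key k₁ S₁ c₁ hk₁.1 hS₁ hc₁ ?_ (Or.inl rfl)⟩
    rw [hmS₁]
    nlinarith [hP]
  have hx₂ : x ∈ {y : EuclideanSpace ℝ (Fin d) |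
      ‖y‖ = 1 ∧ Real.cos (Real.arcsin (Real.sqrt k₂)⁻¹) < ⟪y, c₂⟫} := by
    refine ⟨hxnorm, key k₂ S₂ c₂ hk₂.1 hS₂ hc₂ ?_ (Or.inr rfl)⟩
    rw [hmS₂]
    nlinarith [hP]
  exact Set.disjoint_left.mp hdisj hx₁ hx₂
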